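/- Fix a time window [t_0, Λt_0] with t_0 > 0 and Λ > 1, quadrature nodes z_1,…,z_{N−1} ∈ ℂ with derivatives z'_1,…,z'_{N−1} ∈ ℂ, and a constant c > 0. For each j let û(z_j;μ) solve (z_j I − A(μ)) û(z_j;μ) = u_0(μ) + b̂(z_j;μ), let û_r(z_j;μ) ∈ ℂ^{N_h} be arbitrary approximations, and define the residuals r̂(z_j;μ) = (z_j I − A(μ)) û_r(z_j;μ) − u_0(μ) − b̂(z_j;μ). Define u(t;μ) = (c/(iN)) Σ_{j=1}^{N−1} e^{z_j t} û(z_j;μ) z'_j and u_r(t;μ) = (c/(iN)) Σ_{j=1}^{N−1} e^{z_j t} û_r(z_j;μ) z'_j. Then max_{t∈[t_0,Λt_0]} ‖u(t;μ) − u_r(t;μ)‖ ≤ Δ(μ), where Δ(μ) = (c/N) Σ_{j=1}^{N−1} e^{Re(z_j) t_j} |z'_j| ‖(z_j I − A(μ))^{-1}‖ ‖r̂(z_j;μ)‖, with t_j = Λt_0 if Re(z_j) ≥ 0 and t_j = t_0 if Re(z_j) < 0. -/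

import Mathlib

noncomputable def toES {𝕜 : Type*} [RCLike 𝕜] {n : ℕ} (v : Fin n → 𝕜) :
    EuclideanSpace 𝕜 (Fin n) := (WithLp.equiv 2 (Fin n → 𝕜)).symm v

noncomputable def fromES {𝕜 : Type*} [RCLike 𝕜] {n : ℕ} (v : EuclideanSpace 𝕜 (Fin n)) :
    Fin n → 𝕜 := WithLp.equiv 2 (Fin n → 𝕜) v

/-- Action of a matrix on Euclidean space. -/
noncomputable def mvES {𝕜 : Type*} [RCLike 𝕜] {n : ℕ} (M : Matrix (Fin n) (Fin n) 𝕜)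
    (v : EuclideanSpace 𝕜 (Fin n)) : EuclideanSpace 𝕜 (Fin n) := toES (M.mulVec (fromES v))

noncomputable def cvec {n : ℕ} (v : EuclideanSpace ℝ (Fin n)) : EuclideanSpace ℂ (Fin n) :=
  toES (fun i => Complex.ofReal (fromES v i))

def cmat {m n : ℕ} (M : Matrix (Fin m) (Fin n) ℝ) : Matrix (Fin m) (Fin n) ℂ :=
  M.map Complex.ofReal

/-- Spectral (operator) norm of a complex matrix. -/
noncomputable def specNorm {n : ℕ} (M : Matrix (Fin n) (Fin n) ℂ) : ℝ :=
  ‖Matrix.toEuclideanCLM (𝕜 := ℂ) M‖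

lemma mvES_eq_clm {n : ℕ} (M : Matrix (Fin n) (Fin n) ℂ) (v : EuclideanSpace ℂ (Fin n)) :
    mvES M v = Matrix.toEuclideanCLM (𝕜 := ℂ) M v := by
  rfl

lemma mvES_norm_le {n : ℕ} (M : Matrix (Fin n) (Fin n) ℂ) (v : EuclideanSpace ℂ (Fin n)) :
    ‖mvES M v‖ ≤ specNorm M * ‖v‖ := by
  rw [mvES_eq_clm]; exact (Matrix.toEuclideanCLM (𝕜 := ℂ) M).le_opNorm v

lemma mvES_mvES {n : ℕ} (M P : Matrix (Fin n) (Fin n) ℂ) (v : EuclideanSpace ℂ (Fin n)) :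
    mvES M (mvES P v) = mvES (M * P) v := by
  simp only [mvES_eq_clm, map_mul]; rfl

lemma mvES_sub {n : ℕ} (M : Matrix (Fin n) (Fin n) ℂ) (v w : EuclideanSpace ℂ (Fin n)) :
    mvES M (v - w) = mvES M v - mvES M w := by
  simp only [mvES_eq_clm, map_sub]

lemma mvES_one {n : ℕ} (v : EuclideanSpace ℂ (Fin n)) : mvES 1 v = v := by
  simp only [mvES_eq_clm, map_one]; rfl

/-- residual-based a posteriori error estimator on a time window:
`max_{t ∈ [t₀, Λt₀]} ‖u(t;μ) - u_r(t;μ)‖ ≤ Δ(μ)`. -/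
theorem time_window_error_estimator
    (Nh N : ℕ) (t0 Λ : ℝ) (ht0 : 0 < t0) (hΛ : 1 < Λ) (c : ℝ) (hc : 0 < c)
    (z z' : Fin (N - 1) → ℂ)
    (A : Matrix (Fin Nh) (Fin Nh) ℝ)
    (u0 : EuclideanSpace ℝ (Fin Nh))
    (bhat : Fin (N - 1) → EuclideanSpace ℂ (Fin Nh))
    -- invertibility of `z_j I - A(μ)`
    (hinv : ∀ j, IsUnit (z j • (1 : Matrix (Fin Nh) (Fin Nh) ℂ) - cmat A))
    (uhat uhatr : Fin (N - 1) → EuclideanSpace ℂ (Fin Nh))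
    -- `û(z_j;μ)` solves `(z_j I - A(μ)) û(z_j;μ) = u₀(μ) + b̂(z_j;μ)`
    (huhat : ∀ j, mvES (z j • (1 : Matrix (Fin Nh) (Fin Nh) ℂ) - cmat A) (uhat j)
      = cvec u0 + bhat j)
    -- residuals of the arbitrary approximations `û_r(z_j;μ)`
    (rhat : Fin (N - 1) → EuclideanSpace ℂ (Fin Nh))
    (hrhat : ∀ j, rhat j
      = mvES (z j • (1 : Matrix (Fin Nh) (Fin Nh) ℂ) - cmat A) (uhatr j) - cvec u0 - bhat j) :
    ∀ t ∈ Set.Icc t0 (Λ * t0),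
      ‖((c / (Complex.I * N)) • ∑ j, (Complex.exp (z j * t) * z' j) • uhat j)
        - ((c / (Complex.I * N)) • ∑ j, (Complex.exp (z j * t) * z' j) • uhatr j)‖
      ≤ (c / N) * ∑ j,
          Real.exp ((z j).re * (if 0 ≤ (z j).re then Λ * t0 else t0)) * ‖z' j‖ *
          specNorm ((z j • (1 : Matrix (Fin Nh) (Fin Nh) ℂ) - cmat A)⁻¹) * ‖rhat j‖ := by
  intro t ht
  set M : Fin (N - 1) → Matrix (Fin Nh) (Fin Nh) ℂ :=
    fun j => z j • (1 : Matrix (Fin Nh) (Fin Nh) ℂ) - cmat A with hM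
  -- error identity
  have herr : ∀ j, uhatr j - uhat j = mvES (M j)⁻¹ (rhat j) := by
    intro j
    have h1 : mvES (M j) (uhatr j - uhat j) = rhat j := by
      rw [mvES_sub, huhat j, hrhat j]; abel
    have h2 : mvES (M j)⁻¹ (mvES (M j) (uhatr j - uhat j)) = uhatr j - uhat j := by
      rw [mvES_mvES, Matrix.nonsing_inv_mul _ ((Matrix.isUnit_iff_isUnit_det _).mp (hinv j)),
        mvES_one]
    rw [← h2, h1]
  have hnorm_err : ∀ j, ‖uhat j - uhatr j‖ ≤ specNorm (M j)⁻¹ * ‖rhat j‖ := by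
    intro j
    rw [← norm_neg, neg_sub, herr j]
    exact mvES_norm_le _ _
  rw [← smul_sub, ← Finset.sum_sub_distrib]
  have hsmul : ∀ j, (Complex.exp (z j * t) * z' j) • uhat j
      - (Complex.exp (z j * t) * z' j) • uhatr j
      = (Complex.exp (z j * t) * z' j) • (uhat j - uhatr j) := fun j => (smul_sub _ _ _).symm
  simp only [hsmul]
  rw [norm_smul]
  have hcN : ‖((c : ℂ) / (Complex.I * N))‖ = c / N := by
    rw [norm_div, norm_mul, Complex.norm_I, Complex.norm_real, Complex.norm_natCast, one_mul,
      Real.norm_of_nonneg hc.le]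
  rw [hcN]
  apply mul_le_mul_of_nonneg_left _ (div_nonneg hc.le (Nat.cast_nonneg N))
  refine (norm_sum_le _ _).trans (Finset.sum_le_sum fun j _ => ?_)
  rw [norm_smul, norm_mul]
  have habs : ‖Complex.exp (z j * t)‖ ≤ Real.exp ((z j).re * (if 0 ≤ (z j).re then Λ * t0 else t0)) := by
    rw [Complex.norm_exp]
    apply Real.exp_le_exp.mpr
    have : (z j * t).re = (z j).re * t := by simp [Complex.mul_re]
    rw [this]
    by_cases h : 0 ≤ (z j).re
    · simp only [h, if_true]
      exact mul_le_mul_of_nonneg_left ht.2 h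
    · simp only [h, if_false]
      exact mul_le_mul_of_nonpos_left ht.1 (le_of_not_ge h)
  calc ‖Complex.exp (z j * t)‖ * ‖z' j‖ * ‖uhat j - uhatr j‖
      ≤ Real.exp ((z j).re * (if 0 ≤ (z j).re then Λ * t0 else t0)) * ‖z' j‖
        * (specNorm (M j)⁻¹ * ‖rhat j‖) := by
        apply mul_le_mul (mul_le_mul_of_nonneg_right habs (norm_nonneg _)) (hnorm_err j)
          (norm_nonneg _) (by positivity)
    _ = Real.exp ((z j).re * (if 0 ≤ (z j).re then Λ * t0 else t0)) * ‖z' j‖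
        * specNorm (M j)⁻¹ * ‖rhat j‖ := by
        ring
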